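/- Let k be a field, let a ∈ k be an element that is not a square in k, and let P ∈ k[X] be a polynomial of degree 1. Then the fraction field of k[X,Y,Z]/(Z² − aY² − P(X)) is k-rational. -/

import Mathlib

open MvPolynomial


/-- The ideal of `k[X,Y,Z]` generated by `Z² − aY² − P(X)`, where the variables
`X, Y, Z` of `MvPolynomial (Fin 3) k` are indexed by `0, 1, 2` respectively. -/
noncomputable abbrev chateletIdeal (k : Type) [Field k] (a : k) (P : Polynomial k) :
    Ideal (MvPolynomial (Fin 3) k) :=
  Ideal.span {MvPolynomial.X 2 ^ 2 - MvPolynomial.C a * MvPolynomial.X 1 ^ 2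
      - Polynomial.aeval (MvPolynomial.X 0) P}

/-- The ring `k[X,Y,Z]/(Z² − aY² − P(X))`. -/
abbrev chateletRing (k : Type) [Field k] (a : k) (P : Polynomial k) : Type :=
  MvPolynomial (Fin 3) k ⧸ chateletIdeal k a P

/-- A `k`-algebra `K` is `k`-rational if it is `k`-isomorphic to the rational function
field in two variables over `k`. -/
def IsKRational (k : Type) [Field k] (K : Type) [CommRing K] [Algebra k K] : Prop :=
  Nonempty (K ≃ₐ[k] FractionRing (MvPolynomial (Fin 2) k))


set_option synthInstance.maxHeartbeats 1000000 in
set_option maxHeartbeats 1000000 in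
/-- If `a` is not a square in `k` and `deg P = 1`, then the fraction field of
`k[X,Y,Z]/(Z² − aY² − P(X))` is `k`-rational. -/
theorem chatelet_rational_of_degree_one (k : Type) [Field k]
    (a : k) (ha : ¬ IsSquare a)
    (P : Polynomial k) (hdeg : P.degree = 1) :
    IsKRational k (FractionRing (chateletRing k a P)) := by
  classical
  set c := P.coeff 1 with hc
  set d := P.coeff 0 with hd
  have hc0 : c ≠ 0 := Polynomial.coeff_ne_zero_of_eq_degree hdeg
  have hP : P = Polynomial.C c * Polynomial.X + Polynomial.C d :=
    Polynomial.eq_X_add_C_of_degree_le_one hdeg.le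
  set gen : MvPolynomial (Fin 3) k :=
    X 2 ^ 2 - C a * X 1 ^ 2 - Polynomial.aeval (X 0) P with hgendef
  set I := Ideal.span {gen} with hI
  have hgenval : gen = X 2 ^ 2 - C a * X 1 ^ 2 - (C c * X 0 + C d) := by
    rw [hgendef]
    conv_lhs => rw [hP]
    simp [algebraMap_eq]
  have hCc3 : (C c⁻¹ : MvPolynomial (Fin 3) k) * C c = 1 := by
    rw [← C_mul, inv_mul_cancel₀ hc0, C_1]
  have hCc2 : (C c⁻¹ : MvPolynomial (Fin 2) k) * C c = 1 := by
    rw [← C_mul, inv_mul_cancel₀ hc0, C_1]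
  set φ : MvPolynomial (Fin 3) k →ₐ[k] MvPolynomial (Fin 2) k :=
    aeval ![C c⁻¹ * (X 1 ^ 2 - C a * X 0 ^ 2 - C d), X 0, X 1] with hφ
  have hφgen : φ gen = 0 := by
    rw [hgenval, hφ]
    simp only [map_sub, map_add, map_mul, map_pow, aeval_X, aeval_C, algebraMap_eq,
      Matrix.cons_val_zero, Matrix.cons_val_one, Matrix.head_cons, Matrix.cons_val_two,
      Matrix.tail_cons]
    linear_combination (-(X 1 ^ 2 - C a * X 0 ^ 2 - C d) : MvPolynomial (Fin 2) k) * hCc2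
  have hker : ∀ x ∈ I, φ x = 0 := by
    intro x hx
    obtain ⟨z, rfl⟩ := Ideal.mem_span_singleton.mp hx
    rw [map_mul, hφgen, zero_mul]
  set φ' : (MvPolynomial (Fin 3) k ⧸ I) →ₐ[k] MvPolynomial (Fin 2) k :=
    Ideal.Quotient.liftₐ I φ hker with hφ'
  set mk := Ideal.Quotient.mkₐ k I with hmk
  set θ : MvPolynomial (Fin 2) k →ₐ[k] MvPolynomial (Fin 3) k :=
    aeval ![X 1, X 2] with hθ
  set ψ : MvPolynomial (Fin 2) k →ₐ[k] (MvPolynomial (Fin 3) k ⧸ I) :=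
    mk.comp θ with hψ
  have hmkgen : mk gen = 0 := by
    rw [hmk, Ideal.Quotient.mkₐ_eq_mk, Ideal.Quotient.eq_zero_iff_mem]
    exact Ideal.subset_span rfl
  have hφ'mk : ∀ p, φ' (mk p) = φ p := fun p => by
    rw [hφ', hmk, Ideal.Quotient.mkₐ_eq_mk, Ideal.Quotient.liftₐ_apply]
    exact Ideal.Quotient.lift_mk _ _ _
  have left : φ'.comp ψ = AlgHom.id k (MvPolynomial (Fin 2) k) := by
    apply MvPolynomial.algHom_ext
    intro i
    have g0 : (φ'.comp ψ) (X (0 : Fin 2)) = X 0 := by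
      simp only [AlgHom.comp_apply, hψ, hθ, aeval_X, Matrix.cons_val_zero]
      rw [hφ'mk]; rw [hφ]; simp
    have g1 : (φ'.comp ψ) (X (1 : Fin 2)) = X 1 := by
      simp only [AlgHom.comp_apply, hψ, hθ, aeval_X,
        Matrix.cons_val_one, Matrix.head_cons]
      rw [hφ'mk]; rw [hφ]; simp
    fin_cases i
    · exact g0.trans rfl
    · exact g1.trans rfl
  have right : ψ.comp φ' = AlgHom.id k (MvPolynomial (Fin 3) k ⧸ I) := by
    apply Ideal.Quotient.algHom_ext
    apply MvPolynomial.algHom_ext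
    intro i
    have base : ∀ j : Fin 3, ((ψ.comp φ').comp mk) (X j) = ψ (φ (X j)) := fun j => by
      simp only [AlgHom.comp_apply, hmk, Ideal.Quotient.mkₐ_eq_mk]
      rw [← Ideal.Quotient.mkₐ_eq_mk (R₁ := k), ← hmk, hφ'mk]
    have g0 : ((ψ.comp φ').comp mk) (X (0 : Fin 3))
        = ((AlgHom.id k _).comp mk) (X (0 : Fin 3)) := by
      rw [base]
      have hφX0 : φ (X 0) = C c⁻¹ * (X 1 ^ 2 - C a * X 0 ^ 2 - C d) := by
        rw [hφ]; simp
      have hθim : θ (C c⁻¹ * (X 1 ^ 2 - C a * X 0 ^ 2 - C d))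
          = C c⁻¹ * (X 2 ^ 2 - C a * X 1 ^ 2 - C d) := by
        rw [hθ]; simp [algebraMap_eq]
      have key : (C c⁻¹ : MvPolynomial (Fin 3) k) * (X 2 ^ 2 - C a * X 1 ^ 2 - C d)
          = C c⁻¹ * gen + X 0 := by
        rw [hgenval]
        linear_combination (X 0 : MvPolynomial (Fin 3) k) * hCc3
      rw [hφX0, hψ, AlgHom.comp_apply, hθim, key, map_add, map_mul, hmkgen, mul_zero,
        zero_add]
      simp
    have g1 : ((ψ.comp φ').comp mk) (X (1 : Fin 3))
        = ((AlgHom.id k _).comp mk) (X (1 : Fin 3)) := by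
      rw [base]
      have : φ (X 1) = X 0 := by rw [hφ]; simp
      rw [this, hψ, AlgHom.comp_apply, hθ]
      simp
    have g2 : ((ψ.comp φ').comp mk) (X (2 : Fin 3))
        = ((AlgHom.id k _).comp mk) (X (2 : Fin 3)) := by
      rw [base]
      have : φ (X 2) = X 1 := by rw [hφ]; simp
      rw [this, hψ, AlgHom.comp_apply, hθ]
      simp
    fin_cases i
    · exact g0
    · exact g1
    · exact g2
  set e : (MvPolynomial (Fin 3) k ⧸ I) ≃ₐ[k] MvPolynomial (Fin 2) k :=
    AlgEquiv.ofAlgHom φ' ψ left right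
  exact ⟨IsFractionRing.algEquivOfAlgEquiv
    (K := FractionRing (chateletRing k a P))
    (L := FractionRing (MvPolynomial (Fin 2) k)) e⟩
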